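/- Let g be a positive integer, let θ : ℂ^g → ℂ be an entire (analytic) function, and let z₀ ∈ ℂ^g be a point with θ(z₀) = 0 and ∂θ/∂z_j(z₀) = 0 for all j = 1,…,g. Fix U, V, W ∈ ℂ^g and c, d ∈ ℂ. Then the directional derivative in the direction U of the function z ↦ H_z(U,V,W,c,d), evaluated at z = z₀, equals 2·(∂_U²θ(z₀))·(∂_U³θ(z₀)). -/

import Mathlib

open Complex

/-- The directional derivative operator `∂_U = u₁ ∂/∂z₁ + ⋯ + u_g ∂/∂z_g`. -/
noncomputable def dd {g : ℕ} (U : Fin g → ℂ) (f : (Fin g → ℂ) → ℂ)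
    (z : Fin g → ℂ) : ℂ :=
  fderiv ℂ f z U

/-- The Hirota quartic `H_z(U,V,W,c,d)` associated to a function `θ : ℂ^g → ℂ`. -/
noncomputable def hirotaQuartic {g : ℕ} (θ : (Fin g → ℂ) → ℂ)
    (z U V W : Fin g → ℂ) (c d : ℂ) : ℂ :=
  ((dd U)^[4] θ z * θ z - 4 * (dd U)^[3] θ z * dd U θ z + 3 * ((dd U)^[2] θ z) ^ 2)
    + 4 * (dd U θ z * dd W θ z - θ z * dd U (dd W θ) z)
    + 6 * c * ((dd U)^[2] θ z * θ z - (dd U θ z) ^ 2)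
    + 3 * (θ z * (dd V)^[2] θ z - (dd V θ z) ^ 2)
    + 8 * d * (θ z) ^ 2

lemma dd_analytic {g : ℕ} (U : Fin g → ℂ) {f : (Fin g → ℂ) → ℂ}
    (hf : ∀ z, AnalyticAt ℂ f z) : ∀ z, AnalyticAt ℂ (dd U f) z := by
  intro z
  have h1 : AnalyticAt ℂ (fderiv ℂ f) z := (hf z).fderiv
  have h2 : AnalyticAt ℂ (fun T : (Fin g → ℂ) →L[ℂ] ℂ => T U) (fderiv ℂ f z) :=
    (ContinuousLinearMap.apply ℂ ℂ U).analyticAt _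
  exact h2.comp h1

/-- If `θ` is entire and `z₀` is a point where `θ` and all its first
partial derivatives vanish, then for fixed `U, V, W, c, d` the directional derivative
in direction `U` of `z ↦ H_z(U,V,W,c,d)` at `z₀` equals `2·∂_U²θ(z₀)·∂_U³θ(z₀)`. -/
theorem dirDeriv_hirota_quartic_at_singular_point (g : ℕ) (hg : 0 < g)
    (θ : (Fin g → ℂ) → ℂ) (hθ : ∀ z, AnalyticAt ℂ θ z)
    (z₀ : Fin g → ℂ) (h0 : θ z₀ = 0)
    (h1 : ∀ j : Fin g, fderiv ℂ θ z₀ (Pi.single j 1) = 0)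
    (U V W : Fin g → ℂ) (c d : ℂ) :
    dd U (fun z => hirotaQuartic θ z U V W c d) z₀ =
      2 * (dd U)^[2] θ z₀ * (dd U)^[3] θ z₀ := by
  have hiter : ∀ (X : Fin g → ℂ) (k : ℕ), ∀ z, AnalyticAt ℂ ((dd X)^[k] θ) z := by
    intro X k
    induction k with
    | zero => simpa using hθ
    | succ n ih =>
      intro z
      rw [Function.iterate_succ_apply']
      exact dd_analytic X ih z
  -- first derivative of θ at z₀ is zero
  have hz1 : fderiv ℂ θ z₀ = 0 := by
    apply ContinuousLinearMap.ext
    intro x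
    have hx : x = ∑ j : Fin g, x j • (Pi.single j (1 : ℂ) : Fin g → ℂ) := by
      ext i
      simp [Pi.single_apply, Finset.sum_apply]
    rw [hx]
    simp [h1]
  have hU0 : dd U θ z₀ = 0 := by simp [dd, hz1]
  have hV0 : dd V θ z₀ = 0 := by simp [dd, hz1]
  have hW0 : dd W θ z₀ = 0 := by simp [dd, hz1]
  -- differentiability facts
  have Dθ : DifferentiableAt ℂ θ z₀ := (hθ z₀).differentiableAt
  have D1 : DifferentiableAt ℂ (dd U θ) z₀ := (dd_analytic U hθ z₀).differentiableAt
  have D2 : DifferentiableAt ℂ ((dd U)^[2] θ) z₀ := (hiter U 2 z₀).differentiableAt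
  have D3 : DifferentiableAt ℂ ((dd U)^[3] θ) z₀ := (hiter U 3 z₀).differentiableAt
  have D4 : DifferentiableAt ℂ ((dd U)^[4] θ) z₀ := (hiter U 4 z₀).differentiableAt
  have DgW : DifferentiableAt ℂ (dd W θ) z₀ := (dd_analytic W hθ z₀).differentiableAt
  have DgWU : DifferentiableAt ℂ (dd U (dd W θ)) z₀ :=
    (dd_analytic U (dd_analytic W hθ) z₀).differentiableAt
  have DgV : DifferentiableAt ℂ (dd V θ) z₀ := (dd_analytic V hθ z₀).differentiableAt
  have DgV2 : DifferentiableAt ℂ ((dd V)^[2] θ) z₀ := (hiter V 2 z₀).differentiableAt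
  -- conversion of fderiv applied to U into iterates
  have step1 : fderiv ℂ (dd U θ) z₀ U = (dd U)^[2] θ z₀ := by
    rw [show (2:ℕ) = 1 + 1 from rfl, Function.iterate_succ_apply']
    simp [dd]
  have step2 : fderiv ℂ ((dd U)^[2] θ) z₀ U = (dd U)^[3] θ z₀ := by
    rw [show (3:ℕ) = 2 + 1 from rfl, Function.iterate_succ_apply']
    simp [dd]
  show fderiv ℂ (fun z => hirotaQuartic θ z U V W c d) z₀ U = _
  simp only [hirotaQuartic, pow_two]
  have dA := D4.fun_mul Dθ
  have dB := (D3.const_mul (4:ℂ)).fun_mul D1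
  have dC := (D2.fun_mul D2).const_mul (3:ℂ)
  have dD := ((D1.fun_mul DgW).fun_sub (Dθ.fun_mul DgWU)).const_mul (4:ℂ)
  have dE := ((D2.fun_mul Dθ).fun_sub (D1.fun_mul D1)).const_mul (6*c)
  have dF := ((Dθ.fun_mul DgV2).fun_sub (DgV.fun_mul DgV)).const_mul (3:ℂ)
  have dG := (Dθ.fun_mul Dθ).const_mul (8*d)
  simp only [fderiv_fun_add (((((dA.fun_sub dB).fun_add dC).fun_add dD).fun_add dE).fun_add dF) dG,
    fderiv_fun_add ((((dA.fun_sub dB).fun_add dC).fun_add dD).fun_add dE) dF,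
    fderiv_fun_add (((dA.fun_sub dB).fun_add dC).fun_add dD) dE,
    fderiv_fun_add ((dA.fun_sub dB).fun_add dC) dD,
    fderiv_fun_add (dA.fun_sub dB) dC,
    fderiv_fun_sub dA dB,
    fderiv_fun_mul D4 Dθ,
    fderiv_fun_mul (D3.const_mul (4:ℂ)) D1,
    fderiv_const_mul D3 (4:ℂ),
    fderiv_const_mul (D2.fun_mul D2) (3:ℂ),
    fderiv_fun_mul D2 D2,
    fderiv_const_mul ((D1.fun_mul DgW).fun_sub (Dθ.fun_mul DgWU)) (4:ℂ),
    fderiv_fun_sub (D1.fun_mul DgW) (Dθ.fun_mul DgWU),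
    fderiv_fun_mul D1 DgW,
    fderiv_fun_mul Dθ DgWU,
    fderiv_const_mul ((D2.fun_mul Dθ).fun_sub (D1.fun_mul D1)) (6*c),
    fderiv_fun_sub (D2.fun_mul Dθ) (D1.fun_mul D1),
    fderiv_fun_mul D2 Dθ,
    fderiv_fun_mul D1 D1,
    fderiv_const_mul ((Dθ.fun_mul DgV2).fun_sub (DgV.fun_mul DgV)) (3:ℂ),
    fderiv_fun_sub (Dθ.fun_mul DgV2) (DgV.fun_mul DgV),
    fderiv_fun_mul Dθ DgV2,
    fderiv_fun_mul DgV DgV,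
    fderiv_const_mul (Dθ.fun_mul Dθ) (8*d),
    fderiv_fun_mul Dθ Dθ]
  simp only [ContinuousLinearMap.add_apply, ContinuousLinearMap.sub_apply,
    ContinuousLinearMap.smul_apply, smul_eq_mul, hz1, ContinuousLinearMap.zero_apply,
    h0, hU0, hV0, hW0, step1, step2]
  ring
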